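/- Let M be a matroid on ground set E. Define a relation on E by a ∼ b iff a = b or there exist bases B₁, B₂ of M with B₂ = (B₁ \ {a}) ∪ {b}. Then ∼ is an equivalence relation on E. -/

import Mathlib

/-- The basis exchange axiom for a collection of subsets of a finite set `E`. -/
def ExchangeAxiom {α : Type*} [DecidableEq α] (𝓑 : Finset (Finset α)) : Prop :=
  ∀ B₁ ∈ 𝓑, ∀ B₂ ∈ 𝓑, ∀ x ∈ B₁ \ B₂, ∃ y ∈ B₂ \ B₁, insert y (B₁.erase x) ∈ 𝓑

/-- The exchange relation on the ground set of a matroid: `a ∼ b` iff `a = b` or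
there exist bases `B₁, B₂` with `a ∈ B₁`, `b ∉ B₁` and `B₂ = (B₁ \ {a}) ∪ {b}`. -/
def exchRel {α : Type*} [DecidableEq α] (𝓑 : Finset (Finset α)) (a b : α) : Prop :=
  a = b ∨ ∃ B₁ ∈ 𝓑, ∃ B₂ ∈ 𝓑, a ∈ B₁ ∧ b ∉ B₁ ∧ B₂ = insert b (B₁.erase a)

section Aux

open Set

/-- A circuit: a minimal dependent set. -/
def MCircuit {α : Type*} (M : Matroid α) (C : Set α) : Prop :=
  ¬ M.Indep C ∧ ∀ x ∈ C, M.Indep (C \ {x})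

variable {α : Type*} [Fintype α] {M : Matroid α}

lemma mcircuit_eq_of_subset (hC : MCircuit M C) (hD : MCircuit M D) (h : C ⊆ D) : C = D := by
  by_contra hne
  obtain ⟨x, hxD, hxC⟩ := exists_of_ssubset (ssubset_of_subset_of_ne h hne)
  exact hC.1 ((hD.2 x hxD).subset (subset_diff_singleton h hxC))

lemma exists_mcircuit_subset :
    ∀ (n : ℕ) (D : Set α), D.ncard ≤ n → ¬ M.Indep D → ∃ C, C ⊆ D ∧ MCircuit M C := by
  intro n
  induction n with
  | zero =>
    intro D hD hind
    rw [Nat.le_zero, ncard_eq_zero] at hD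
    exact absurd (hD ▸ M.empty_indep) hind
  | succ n IH =>
    intro D hD hind
    by_cases h : ∀ x ∈ D, M.Indep (D \ {x})
    · exact ⟨D, subset_rfl, hind, h⟩
    · push_neg at h
      obtain ⟨x, hx, hdep⟩ := h
      have hlt : (D \ {x}).ncard < D.ncard := ncard_diff_singleton_lt_of_mem hx
      obtain ⟨C, hCD, hC⟩ := IH (D \ {x}) (by omega) hdep
      exact ⟨C, hCD.trans diff_subset, hC⟩

set_option linter.unusedSectionVars false

lemma mcircuit_weak_elim (hE : M.E = univ) {C₁ C₂ : Set α} (hC₁ : MCircuit M C₁)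
    (hC₂ : MCircuit M C₂) (hne : C₁ ≠ C₂) {e : α} (he₁ : e ∈ C₁) (he₂ : e ∈ C₂) :
    ¬ M.Indep ((C₁ ∪ C₂) \ {e}) := by
  intro hX
  set Y : Set α := C₁ ∪ C₂ with hY
  have hground : ∀ S : Set α, S ⊆ M.E := fun S => hE ▸ subset_univ S
  -- X is a basis of Y
  have heY : e ∈ Y := Or.inl he₁
  have hXb : M.IsBasis (Y \ {e}) Y := by
    refine hX.isBasis_of_forall_insert diff_subset (fun f hf => ?_)
    have hfe : f = e := by
      by_contra hfe
      exact hf.2 ⟨hf.1, hfe⟩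
    subst hfe
    have : insert f (Y \ {f}) = Y := insert_diff_singleton.trans (insert_eq_self.2 heY)
    rw [this]
    exact (Matroid.dep_of_not_indep hC₁.1 (hground _)).superset subset_union_left (hground _)
  -- get g ∈ C₂ \ C₁
  have hg : ∃ g, g ∈ C₂ ∧ g ∉ C₁ := by
    by_contra h
    push_neg at h
    exact hne (mcircuit_eq_of_subset hC₂ hC₁ h).symm
  obtain ⟨g, hgC₂, hgC₁⟩ := hg
  -- extend C₂ \ {g} to a basis K of Y
  obtain ⟨K, hK, hsubK⟩ := (hC₂.2 g hgC₂).subset_isBasis_of_subset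
    (show C₂ \ {g} ⊆ Y from diff_subset.trans subset_union_right) (hground _)
  have hgK : g ∉ K := by
    intro hgK
    refine hC₂.1 (hK.indep.subset (fun x hx => ?_))
    by_cases hxg : x = g
    · exact hxg ▸ hgK
    · exact hsubK ⟨hx, hxg⟩
  obtain ⟨h, hhC₁, hhK⟩ : ∃ h, h ∈ C₁ ∧ h ∉ K := by
    by_contra hcon
    push_neg at hcon
    exact hC₁.1 (hK.indep.subset hcon)
  have hgh : g ≠ h := fun hgh => hgC₁ (hgh ▸ hhC₁)
  -- cardinality contradiction
  have hcard : K.encard = (Y \ {e}).encard := hK.encard_eq_encard hXb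
  have hcard' : K.ncard = (Y \ {e}).ncard := by
    rw [Set.ncard, Set.ncard, hcard]
  have hKsub : K ⊆ Y \ {g, h} := subset_diff.2 ⟨hK.subset, by
    rw [disjoint_comm]
    simp [Set.disjoint_left, hgK, hhK]⟩
  have h1 : K.ncard ≤ (Y \ {g, h}).ncard := ncard_le_ncard hKsub
  have h2 : (Y \ {g, h}).ncard = Y.ncard - 2 := by
    rw [ncard_diff (by simp [insert_subset_iff, hgC₂, hhC₁, hY, Set.subset_def])]
    congr 1
    rw [ncard_pair hgh]
  have h3 : (Y \ {e}).ncard = Y.ncard - 1 := by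
    rw [ncard_diff (by simpa), ncard_singleton]
  have h4 : ({g, h} : Set α).ncard ≤ Y.ncard :=
    ncard_le_ncard (by simp [insert_subset_iff, hgC₂, hhC₁, hY, Set.subset_def])
  rw [ncard_pair hgh] at h4
  omega

lemma mcircuit_strong_elim (hE : M.E = univ) :
    ∀ (n : ℕ) (C₁ C₂ : Set α), (C₁ ∪ C₂).ncard ≤ n → MCircuit M C₁ → MCircuit M C₂ →
      ∀ e ∈ C₁, e ∈ C₂ → ∀ f ∈ C₁, f ∉ C₂ →
      ∃ C, MCircuit M C ∧ f ∈ C ∧ C ⊆ (C₁ ∪ C₂) \ {e} := by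
  intro n
  induction n with
  | zero =>
    intro C₁ C₂ hn _ _ e he₁ _ _ _ _
    rw [Nat.le_zero, ncard_eq_zero] at hn
    exact absurd (hn ▸ (show e ∈ C₁ ∪ C₂ from Or.inl he₁)) (notMem_empty e)
  | succ n IH =>
    intro C₁ C₂ hn hC₁ hC₂ e he₁ he₂ f hf₁ hf₂
    have hne : C₁ ≠ C₂ := fun h => hf₂ (h ▸ hf₁)
    obtain ⟨C₃, hC₃sub, hC₃⟩ := exists_mcircuit_subset ((C₁ ∪ C₂) \ {e}).ncard _ le_rfl
      (mcircuit_weak_elim hE hC₁ hC₂ hne he₁ he₂)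
    by_cases hfC₃ : f ∈ C₃
    · exact ⟨C₃, hC₃, hfC₃, hC₃sub⟩
    have heC₃ : e ∉ C₃ := fun h => (hC₃sub h).2 rfl
    -- choose g ∈ C₃ ∩ (C₂ \ C₁)
    obtain ⟨g, hgC₃, hgC₂, hgC₁⟩ : ∃ g, g ∈ C₃ ∧ g ∈ C₂ ∧ g ∉ C₁ := by
      by_contra hcon
      push_neg at hcon
      have hsub : C₃ ⊆ C₁ := by
        intro x hx
        rcases (hC₃sub hx).1 with h | h
        · exact h
        · by_contra hx1
          exact hx1 (hcon x hx h)
      have := mcircuit_eq_of_subset hC₃ hC₁ hsub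
      exact heC₃ (this ▸ he₁)
    -- apply IH to (C₂, C₃) with e := g, f := e
    have hm1 : (C₂ ∪ C₃).ncard ≤ n := by
      have hsub : C₂ ∪ C₃ ⊆ C₁ ∪ C₂ :=
        union_subset subset_union_right (hC₃sub.trans (diff_subset))
      have hss : C₂ ∪ C₃ ⊂ C₁ ∪ C₂ :=
        ssubset_of_subset_of_ne hsub (fun h => hf₂ (by
          have : f ∈ C₂ ∪ C₃ := h ▸ Or.inl hf₁
          rcases this with h' | h'
          · exact h'
          · exact absurd h' hfC₃))
      have := ncard_lt_ncard hss
      omega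
    obtain ⟨C₄, hC₄, heC₄, hC₄sub⟩ := IH C₂ C₃ hm1 hC₂ hC₃ g hgC₂ hgC₃ e he₂ heC₃
    -- apply IH to (C₁, C₄) with e := e, f := f
    have hfC₄ : f ∉ C₄ := fun h => by
      rcases (hC₄sub h).1 with h' | h'
      · exact hf₂ h'
      · exact hfC₃ h'
    have hC₄sub' : C₄ ⊆ C₁ ∪ C₂ := hC₄sub.trans (diff_subset.trans
      (union_subset subset_union_right (hC₃sub.trans diff_subset)))
    have hgC₄ : g ∉ C₄ := fun h => (hC₄sub h).2 rfl
    have hm2 : (C₁ ∪ C₄).ncard ≤ n := by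
      have hsub : C₁ ∪ C₄ ⊆ C₁ ∪ C₂ := union_subset subset_union_left hC₄sub'
      have hss : C₁ ∪ C₄ ⊂ C₁ ∪ C₂ :=
        ssubset_of_subset_of_ne hsub (fun h => by
          have : g ∈ C₁ ∪ C₄ := h ▸ Or.inr hgC₂
          rcases this with h' | h'
          · exact hgC₁ h'
          · exact hgC₄ h')
      have := ncard_lt_ncard hss
      omega
    have heC₄' : e ∈ C₄ := heC₄
    obtain ⟨C₅, hC₅, hfC₅, hC₅sub⟩ := IH C₁ C₄ hm2 hC₁ hC₄ e he₁ heC₄' f hf₁ hfC₄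
    exact ⟨C₅, hC₅, hfC₅, hC₅sub.trans (diff_subset_diff_left
      (union_subset subset_union_left hC₄sub'))⟩

lemma mcircuit_trans (hE : M.E = univ) :
    ∀ (n : ℕ) (C₁ C₂ : Set α), (C₁ ∪ C₂).ncard ≤ n → MCircuit M C₁ → MCircuit M C₂ →
      (C₁ ∩ C₂).Nonempty → ∀ a ∈ C₁, ∀ c ∈ C₂,
      ∃ D, MCircuit M D ∧ a ∈ D ∧ c ∈ D ∧ D ⊆ C₁ ∪ C₂ := by
  intro n
  induction n with
  | zero =>
    intro C₁ C₂ hn _ _ _ a ha _ _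
    rw [Nat.le_zero, ncard_eq_zero] at hn
    exact absurd (hn ▸ (show a ∈ C₁ ∪ C₂ from Or.inl ha)) (notMem_empty a)
  | succ n IH =>
    intro C₁ C₂ hn hC₁ hC₂ hint a ha c hc
    by_cases ha₂ : a ∈ C₂
    · exact ⟨C₂, hC₂, ha₂, hc, subset_union_right⟩
    by_cases hc₁ : c ∈ C₁
    · exact ⟨C₁, hC₁, ha, hc₁, subset_union_left⟩
    obtain ⟨b, hb₁, hb₂⟩ := hint
    -- C₃ : a ∈ C₃ ⊆ (C₁ ∪ C₂) \ {b}
    obtain ⟨C₃, hC₃, haC₃, hC₃sub⟩ :=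
      mcircuit_strong_elim hE (C₁ ∪ C₂).ncard C₁ C₂ le_rfl hC₁ hC₂ b hb₁ hb₂ a ha ha₂
    by_cases hcC₃ : c ∈ C₃
    · exact ⟨C₃, hC₃, haC₃, hcC₃, hC₃sub.trans diff_subset⟩
    have hbC₃ : b ∉ C₃ := fun h => (hC₃sub h).2 rfl
    -- g ∈ C₃ ∩ (C₂ \ C₁)
    obtain ⟨g, hgC₃, hgC₂, hgC₁⟩ : ∃ g, g ∈ C₃ ∧ g ∈ C₂ ∧ g ∉ C₁ := by
      by_contra hcon
      push_neg at hcon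
      have hsub : C₃ ⊆ C₁ := by
        intro x hx
        rcases (hC₃sub hx).1 with h | h
        · exact h
        · by_contra hx1
          exact hx1 (hcon x hx h)
      have := mcircuit_eq_of_subset hC₃ hC₁ hsub
      exact hbC₃ (this ▸ hb₁)
    -- C₅ : c ∈ C₅ ⊆ (C₂ ∪ C₃) \ {g}
    obtain ⟨C₅, hC₅, hcC₅, hC₅sub⟩ :=
      mcircuit_strong_elim hE (C₂ ∪ C₃).ncard C₂ C₃ le_rfl hC₂ hC₃ g hgC₂ hgC₃ c hc hcC₃
    have hC₃sub' : C₃ ⊆ C₁ ∪ C₂ := hC₃sub.trans diff_subset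
    have hC₅sub' : C₅ ⊆ C₁ ∪ C₂ := hC₅sub.trans (diff_subset.trans
      (union_subset subset_union_right hC₃sub'))
    have hgC₅ : g ∉ C₅ := fun h => (hC₅sub h).2 rfl
    by_cases haC₅ : a ∈ C₅
    · exact ⟨C₅, hC₅, haC₅, hcC₅, hC₅sub'⟩
    by_cases hbC₅ : b ∈ C₅
    · -- IH on (C₁, C₅)
      have hm : (C₁ ∪ C₅).ncard ≤ n := by
        have hsub : C₁ ∪ C₅ ⊆ C₁ ∪ C₂ := union_subset subset_union_left hC₅sub'
        have hss : C₁ ∪ C₅ ⊂ C₁ ∪ C₂ := ssubset_of_subset_of_ne hsub (fun h => by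
          have : g ∈ C₁ ∪ C₅ := h ▸ Or.inr hgC₂
          rcases this with h' | h'
          · exact hgC₁ h'
          · exact hgC₅ h')
        have := ncard_lt_ncard hss
        omega
      obtain ⟨D, hD, haD, hcD, hDsub⟩ := IH C₁ C₅ hm hC₁ hC₅ ⟨b, hb₁, hbC₅⟩ a ha c hcC₅
      exact ⟨D, hD, haD, hcD, hDsub.trans (union_subset subset_union_left hC₅sub')⟩
    · -- IH on (C₃, C₅)
      have hint' : (C₃ ∩ C₅).Nonempty := by
        by_contra hcon
        rw [not_nonempty_iff_eq_empty] at hcon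
        have hsub : C₅ ⊆ C₂ := by
          intro x hx
          rcases (hC₅sub hx).1 with h | h
          · exact h
          · exact absurd (mem_inter h hx) (by simp [hcon])
        have := mcircuit_eq_of_subset hC₅ hC₂ hsub
        exact hgC₅ (this ▸ hgC₂)
      have hm : (C₃ ∪ C₅).ncard ≤ n := by
        have hsub : C₃ ∪ C₅ ⊆ C₁ ∪ C₂ := union_subset hC₃sub' hC₅sub'
        have hss : C₃ ∪ C₅ ⊂ C₁ ∪ C₂ := ssubset_of_subset_of_ne hsub (fun h => by
          have : b ∈ C₃ ∪ C₅ := h ▸ Or.inl hb₁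
          rcases this with h' | h'
          · exact hbC₃ h'
          · exact hbC₅ h')
        have := ncard_lt_ncard hss
        omega
      obtain ⟨D, hD, haD, hcD, hDsub⟩ := IH C₃ C₅ hm hC₃ hC₅ hint' a haC₃ c hcC₅
      exact ⟨D, hD, haD, hcD, hDsub.trans (union_subset hC₃sub' hC₅sub')⟩

lemma exch_to_mcircuit (hE : M.E = univ) {B : Set α} (hB : M.IsBase B) {a b : α}
    (ha : a ∈ B) (hb : b ∉ B) (hB' : M.IsBase (insert b (B \ {a}))) :
    ∃ C, MCircuit M C ∧ a ∈ C ∧ b ∈ C := by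
  have hdep : ¬ M.Indep (insert b B) :=
    (hB.insert_dep ⟨hE ▸ mem_univ b, hb⟩).not_indep
  obtain ⟨C, hCsub, hC⟩ := exists_mcircuit_subset (insert b B).ncard _ le_rfl hdep
  have hbC : b ∈ C := by
    by_contra hbC
    exact hC.1 (hB.indep.subset (fun x hx => by
      rcases hCsub hx with h | h
      · exact absurd (h ▸ hx) hbC
      · exact h))
  have haC : a ∈ C := by
    by_contra haC
    refine hC.1 (hB'.indep.subset (fun x hx => ?_))
    rcases hCsub hx with h | h
    · subst h; exact mem_insert x _
    · exact mem_insert_of_mem b ⟨h, fun hxa => haC (hxa ▸ hx)⟩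
  exact ⟨C, hC, haC, hbC⟩

lemma mcircuit_to_exch (hE : M.E = univ) {C : Set α} (hC : MCircuit M C) {a b : α}
    (ha : a ∈ C) (hb : b ∈ C) (hab : a ≠ b) :
    ∃ B, M.IsBase B ∧ a ∈ B ∧ b ∉ B ∧ M.IsBase (insert b (B \ {a})) := by
  obtain ⟨B, hB, hsub⟩ := (hC.2 b hb).exists_isBase_superset
  have hbB : b ∉ B := by
    intro hbB
    refine hC.1 (hB.indep.subset (fun x hx => ?_))
    by_cases hxb : x = b
    · exact hxb ▸ hbB
    · exact hsub ⟨hx, hxb⟩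
  have haB : a ∈ B := hsub ⟨ha, hab⟩
  have hind : M.Indep (insert b (B \ {a})) := by
    by_contra hdep
    obtain ⟨C', hC'sub, hC'⟩ := exists_mcircuit_subset (insert b (B \ {a})).ncard _ le_rfl hdep
    have hbC' : b ∈ C' := by
      by_contra hbC'
      exact hC'.1 (hB.indep.subset (fun x hx => by
        rcases hC'sub hx with h | h
        · exact absurd (h ▸ hx) hbC'
        · exact h.1))
    have haC' : a ∉ C' := fun h => by
      rcases hC'sub h with h' | h'
      · exact hab h'
      · exact h'.2 rfl
    have hne : C ≠ C' := fun h => haC' (h ▸ ha)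
    refine mcircuit_weak_elim hE hC hC' hne hb hbC' (hB.indep.subset (fun x hx => ?_))
    rcases hx.1 with h | h
    · exact hsub ⟨h, hx.2⟩
    · rcases hC'sub h with h' | h'
      · exact absurd h' hx.2
      · exact h'.1
  exact ⟨B, hB, haB, hbB, hB.exchange_isBase_of_indep hbB hind⟩

end Aux

open Set in
/-- **(Oxley.)** For a matroid `M` on a finite ground set `E`, the relation
`a ∼ b` iff `a = b` or some basis exchange replaces `a` by `b`, is an
equivalence relation on `E`. -/
theorem exchRel_equivalence {α : Type*} [Fintype α] [DecidableEq α] (k : ℕ)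
    (𝓑 : Finset (Finset α)) (h0 : 𝓑.Nonempty) (hk : ∀ B ∈ 𝓑, B.card = k)
    (hex : ExchangeAxiom 𝓑) :
    Equivalence (exchRel 𝓑) := by
  classical
  set BaseP : Set α → Prop := fun S => ∃ B ∈ 𝓑, (B : Set α) = S with hBP
  obtain ⟨B0, hB0⟩ := h0
  have hexists : ∃ S, BaseP S := ⟨(B0 : Set α), B0, hB0, rfl⟩
  have bexch : Matroid.ExchangeProperty BaseP := by
    rintro X Y ⟨B₁, h₁, rfl⟩ ⟨B₂, h₂, rfl⟩ x hx
    have hx' : x ∈ B₁ \ B₂ := by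
      simp only [Finset.mem_sdiff]
      exact ⟨by exact_mod_cast hx.1, by exact_mod_cast hx.2⟩
    obtain ⟨y, hy, hmem⟩ := hex B₁ h₁ B₂ h₂ x hx'
    rw [Finset.mem_sdiff] at hy
    refine ⟨y, ⟨by exact_mod_cast hy.1, by exact_mod_cast hy.2⟩, ⟨_, hmem, ?_⟩⟩
    simp [Finset.coe_insert, Finset.coe_erase]
  set M : Matroid α := Matroid.ofIsBaseOfFinite finite_univ BaseP hexists bexch
    (fun _ _ => subset_univ _) with hM
  have hME : M.E = univ := rfl
  have hMBase : ∀ S, M.IsBase S ↔ BaseP S := fun S => by rw [hM, Matroid.ofIsBaseOfFinite_isBase]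
  -- forward bridge
  have fwd : ∀ a b : α, exchRel 𝓑 a b →
      a = b ∨ (a ≠ b ∧ ∃ C, MCircuit M C ∧ a ∈ C ∧ b ∈ C) := by
    rintro a b (rfl | ⟨B₁, h₁, B₂, h₂, ha, hb, heq⟩)
    · exact Or.inl rfl
    · have hab : a ≠ b := fun h => hb (h ▸ ha)
      have hBase₁ : M.IsBase (B₁ : Set α) := (hMBase _).mpr ⟨B₁, h₁, rfl⟩
      have hBase₂ : M.IsBase (insert b ((B₁ : Set α) \ {a})) := by
        refine (hMBase _).mpr ⟨B₂, h₂, ?_⟩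
        rw [heq]
        simp [Finset.coe_insert, Finset.coe_erase]
      exact Or.inr ⟨hab, exch_to_mcircuit hME hBase₁ (by exact_mod_cast ha)
        (by exact_mod_cast hb) hBase₂⟩
  -- backward bridge
  have bwd : ∀ a b : α, a ≠ b → (∃ C, MCircuit M C ∧ a ∈ C ∧ b ∈ C) → exchRel 𝓑 a b := by
    rintro a b hab ⟨C, hC, haC, hbC⟩
    obtain ⟨B, hB, haB, hbB, hB'⟩ := mcircuit_to_exch hME hC haC hbC hab
    obtain ⟨B₁, h₁, rfl⟩ := (hMBase _).mp hB
    obtain ⟨B₂, h₂, hcoe⟩ := (hMBase _).mp hB'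
    refine Or.inr ⟨B₁, h₁, B₂, h₂, by exact_mod_cast haB, by exact_mod_cast hbB, ?_⟩
    apply Finset.coe_injective
    rw [hcoe]
    simp [Finset.coe_insert, Finset.coe_erase]
  refine ⟨fun a => Or.inl rfl, ?_, ?_⟩
  · intro a b h
    rcases fwd a b h with rfl | ⟨hab, C, hC, haC, hbC⟩
    · exact Or.inl rfl
    · exact bwd b a hab.symm ⟨C, hC, hbC, haC⟩
  · intro a b c hab hbc
    rcases fwd a b hab with rfl | ⟨hab', C₁, hC₁, haC₁, hbC₁⟩
    · exact hbc
    rcases fwd b c hbc with rfl | ⟨hbc', C₂, hC₂, hbC₂, hcC₂⟩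
    · exact hab
    by_cases hac : a = c
    · exact Or.inl hac
    obtain ⟨D, hD, haD, hcD, _⟩ := mcircuit_trans hME (C₁ ∪ C₂).ncard C₁ C₂ le_rfl
      hC₁ hC₂ ⟨b, hbC₁, hbC₂⟩ a haC₁ c hcC₂
    exact bwd a c hac ⟨D, hD, haD, hcD⟩
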